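/- Let n be an even integer with n ≥ 4 and k = n/2, and suppose there exists a sequence of integers l_1, …, l_{n−1} such that: l_1 = k; for 2 ≤ t ≤ n−1, 1 ≤ |l_t| ≤ k−1; for each j ∈ {1,…,k−1} there are exactly two indices t with |l_t| = j, and for these two indices the values l_t are equal; the partial sums S_0 = 0 and S_t = l_1 + ⋯ + l_t for 1 ≤ t ≤ n−2 are pairwise distinct modulo n; S_{n−1} ≡ 0 (mod n); and whenever t ≠ t' with l_t = l_{t'}, S_{t−1} ≢ S_{t'−1} (mod 2). Then K*_n admits a nomadic near-Hamiltonian decomposition, consisting of the n/2 nomads g_c(t) = S_t + 2c (c = 0,…,n/2−1) together with the n/2 nomads h_c(t) = 1 + 2c + T_t (c = 0,…,n/2−1), where T_0 = 0, T_1 = k, and T_t = k − (S_t − k) for t ≥ 1, each index taken modulo the period n−1. -/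

import Mathlib

/-- Partial sums `S_t = l_1 + ⋯ + l_t` of a sequence of edge lengths. -/
def nomadPartialSum (l : ℕ → ℤ) (t : ℕ) : ℤ := ∑ i ∈ Finset.Icc 1 t, l i

/-- The partial sums for the second group of nomads: `T_0 = 0`, `T_t = k - (S_t - k)` for
`t ≥ 1` (so `T_1 = k`). -/
def nomadPartialSum' (l : ℕ → ℤ) (k : ℕ) (t : ℕ) : ℤ :=
  if t = 0 then 0 else (k : ℤ) - (nomadPartialSum l t - (k : ℤ))

/-- The family of `n` nomads: `g_c(t) = S_{t mod (n-1)} + 2c` for the first `n/2` nomads and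
`h_c(t) = 1 + 2c + T_{t mod (n-1)}` for the remaining `n/2` nomads. -/
def nomadFamily (n k : ℕ) (l : ℕ → ℤ) : Fin (n / 2) ⊕ Fin (n / 2) → ℕ → ZMod n
  | Sum.inl c, t => ((nomadPartialSum l (t % (n - 1)) : ℤ) : ZMod n) + 2 * ((c : ℕ) : ZMod n)
  | Sum.inr c, t =>
      1 + 2 * ((c : ℕ) : ZMod n) + ((nomadPartialSum' l k (t % (n - 1)) : ℤ) : ZMod n)

/-- If an edge-length sequence `l_1, …, l_{n-1}` as produced for `n ≡ 0 (mod 4)` exists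
(for even `n ≥ 4`, `k = n/2`), then the explicit family of nomads `g_c(t) = S_t + 2c` and
`h_c(t) = 1 + 2c + T_t` (indices mod `n-1`) is a nomadic near-Hamiltonian decomposition
of `K*_n`. -/
theorem nomadic_decomposition_of_edge_length_sequence (n k : ℕ) (hn : 4 ≤ n)
    (heven : n % 2 = 0) (hk : k = n / 2) (l : ℕ → ℤ)
    (hl1 : l 1 = (k : ℤ))
    (hbound : ∀ t, 2 ≤ t → t ≤ n - 1 → 1 ≤ (l t).natAbs ∧ (l t).natAbs ≤ k - 1)
    (htwo : ∀ j : ℕ, 1 ≤ j → j ≤ k - 1 →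
      ((Finset.Icc 1 (n - 1)).filter (fun t => (l t).natAbs = j)).card = 2 ∧
      (∀ t t', t ∈ Finset.Icc 1 (n - 1) → t' ∈ Finset.Icc 1 (n - 1) →
        (l t).natAbs = j → (l t').natAbs = j → l t = l t'))
    (hdistinct : ∀ t₁ t₂, t₁ ≤ n - 2 → t₂ ≤ n - 2 →
      ((nomadPartialSum l t₁ : ℤ) : ZMod n) = ((nomadPartialSum l t₂ : ℤ) : ZMod n) →
      t₁ = t₂)
    (hzero : (n : ℤ) ∣ nomadPartialSum l (n - 1))
    (hparity : ∀ t t', t ∈ Finset.Icc 1 (n - 1) → t' ∈ Finset.Icc 1 (n - 1) → t ≠ t' →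
      l t = l t' →
      nomadPartialSum l (t - 1) % 2 ≠ nomadPartialSum l (t' - 1) % 2) :
    -- each nomad traces a near-Hamiltonian cycle: period n-1 …
    (∀ i, ∀ t, nomadFamily n k l i (t + (n - 1)) = nomadFamily n k l i t) ∧
    -- … and injective on {0, …, n-2}
    (∀ i, ∀ t₁ t₂, t₁ < n - 1 → t₂ < n - 1 →
      nomadFamily n k l i t₁ = nomadFamily n k l i t₂ → t₁ = t₂) ∧
    -- every ordered pair of distinct vertices occurs exactly once as a consecutive pair
    (∀ u v : ZMod n, u ≠ v →
      ∃! x : (Fin (n / 2) ⊕ Fin (n / 2)) × Fin (n - 1),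
        nomadFamily n k l x.1 (x.2 : ℕ) = u ∧ nomadFamily n k l x.1 ((x.2 : ℕ) + 1) = v) ∧
    -- nomadic: distinct nomads never collide
    (∀ i j, i ≠ j → ∀ t, nomadFamily n k l i t ≠ nomadFamily n k l j t) := by
  have h2n : 2 ∣ n := Nat.dvd_of_mod_eq_zero heven
  have hn2 : 2 * k = n := by omega
  have hk2 : 2 ≤ k := by omega
  haveI : NeZero n := ⟨by omega⟩
  have hS0 : nomadPartialSum l 0 = 0 := by simp [nomadPartialSum]
  have hSsucc : ∀ t : ℕ, nomadPartialSum l (t + 1) = nomadPartialSum l t + l (t + 1) :=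
    fun t => Finset.sum_Icc_succ_top (by omega) l
  -- natAbs bounds on the edge lengths
  have habs : ∀ a, 1 ≤ a → a ≤ n - 1 → 1 ≤ (l a).natAbs ∧ (l a).natAbs ≤ k := by
    intro a h1 h2
    rcases eq_or_lt_of_le h1 with h | h
    · rw [← h, hl1]; omega
    · have := hbound a (by omega) h2; omega
  have hidx1 : ∀ a, 1 ≤ a → a ≤ n - 1 → (l a).natAbs = k → a = 1 := by
    intro a h1 h2 h3
    by_contra h
    have := hbound a (by omega) h2
    omega
  have hsign : ∀ a, 1 ≤ a → a ≤ n - 1 → l a ≠ -(k : ℤ) := by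
    intro a h1 h2 h
    have h3 : (l a).natAbs = k := by omega
    have h4 := hidx1 a h1 h2 h3
    rw [h4, hl1] at h
    omega
  -- basic divisibility conversion tools
  have hdvd_of : ∀ a b : ℤ, ((a : ZMod n) = (b : ZMod n)) → (n : ℤ) ∣ a - b := by
    intro a b h
    exact ((ZMod.intCast_eq_intCast_iff _ _ _).mp h.symm).dvd
  have h2nZ : (2 : ℤ) ∣ (n : ℤ) := by exact_mod_cast Int.natCast_dvd_natCast.mpr h2n
  have h2dvd : ∀ a b : ℤ, ((a : ZMod n) = (b : ZMod n)) → (2 : ℤ) ∣ a - b :=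
    fun a b h => dvd_trans h2nZ (hdvd_of a b h)
  have dvd_congr : ∀ a b : ℤ, a = b → (n : ℤ) ∣ a → (n : ℤ) ∣ b := fun a b h h' => h ▸ h'
  have hdvd_cases : ∀ a : ℤ, (n : ℤ) ∣ a → -(n : ℤ) ≤ a → a ≤ n →
      a = -(n : ℤ) ∨ a = 0 ∨ a = (n : ℤ) := by
    intro a ha h1 h2
    rcases ha with ⟨c, rfl⟩
    have hn0 : (0 : ℤ) < n := by exact_mod_cast (by omega : 0 < n)
    have hc : c = -1 ∨ c = 0 ∨ c = 1 := by
      by_contra h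
      push_neg at h
      rcases lt_trichotomy c 0 with h' | h' | h'
      · have hc2 : c ≤ -2 := by omega
        nlinarith
      · omega
      · have hc2 : 2 ≤ c := by omega
        nlinarith
    rcases hc with rfl | rfl | rfl
    · left; ring
    · right; left; ring
    · right; right; ring
  -- matching lemmas for edge lengths
  have hmatch1 : ∀ a b, 1 ≤ a → a ≤ n - 1 → 1 ≤ b → b ≤ n - 1 →
      (n : ℤ) ∣ l a - l b → l a = l b := by
    intro a b ha1 ha2 hb1 hb2 hd
    have Ha := habs a ha1 ha2
    have Hb := habs b hb1 hb2
    have Hsa := hsign a ha1 ha2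
    have Hsb := hsign b hb1 hb2
    rcases hdvd_cases _ hd (by omega) (by omega) with h | h | h <;> omega
  have hmatch2 : ∀ a b, 1 ≤ a → a ≤ n - 1 → 1 ≤ b → b ≤ n - 1 →
      (n : ℤ) ∣ l a + l b → a = 1 ∧ b = 1 := by
    intro a b ha1 ha2 hb1 hb2 hd
    have Ha := habs a ha1 ha2
    have Hb := habs b hb1 hb2
    have Hsa := hsign a ha1 ha2
    have Hsb := hsign b hb1 hb2
    rcases hdvd_cases _ hd (by omega) (by omega) with h | h | h
    · exfalso; omega
    · exfalso
      have hj : (l a).natAbs = (l b).natAbs := by omega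
      by_cases hjk : (l a).natAbs = k
      · have ha' := hidx1 a ha1 ha2 hjk
        have hb' := hidx1 b hb1 hb2 (by omega)
        rw [ha', hb', hl1] at h
        omega
      · have := (htwo (l a).natAbs (by omega) (by omega)).2 a b
          (Finset.mem_Icc.mpr ⟨ha1, ha2⟩) (Finset.mem_Icc.mpr ⟨hb1, hb2⟩) rfl hj.symm
        omega
    · exact ⟨hidx1 a ha1 ha2 (by omega), hidx1 b hb1 hb2 (by omega)⟩
  -- cast normal forms
  have hzeroZ : ((nomadPartialSum l (n - 1) : ℤ) : ZMod n) = 0 :=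
    (ZMod.intCast_zmod_eq_zero_iff_dvd _ _).mpr hzero
  have hcastS : ∀ t, t ≤ n - 1 →
      ((nomadPartialSum l (t % (n - 1)) : ℤ) : ZMod n) = ((nomadPartialSum l t : ℤ) : ZMod n) := by
    intro t ht
    rcases eq_or_lt_of_le ht with h | h
    · rw [h, Nat.mod_self, hS0, hzeroZ]; simp
    · rw [Nat.mod_eq_of_lt h]
  have hnZ : ((n : ℕ) : ZMod n) = 0 := ZMod.natCast_self n
  have hT : ∀ t, ((nomadPartialSum' l k t : ℤ) : ZMod n)
      = -((nomadPartialSum l t : ℤ) : ZMod n) := by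
    intro t
    unfold nomadPartialSum'
    split_ifs with h
    · rw [h, hS0]; simp
    · have h2k : ((2 * k : ℕ) : ZMod n) = 0 := by rw [hn2]; exact hnZ
      push_cast at h2k ⊢
      linear_combination h2k
  have hval1 : ∀ (c : Fin (n / 2)) (t : ℕ), t ≤ n - 1 →
      nomadFamily n k l (Sum.inl c) t
        = ((nomadPartialSum l t + 2 * (c : ℕ) : ℤ) : ZMod n) := by
    intro c t ht
    show ((nomadPartialSum l (t % (n - 1)) : ℤ) : ZMod n) + 2 * ((c : ℕ) : ZMod n) = _
    rw [hcastS t ht]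
    push_cast
    ring
  have hval2 : ∀ (c : Fin (n / 2)) (t : ℕ), t ≤ n - 1 →
      nomadFamily n k l (Sum.inr c) t
        = ((1 + 2 * (c : ℕ) - nomadPartialSum l t : ℤ) : ZMod n) := by
    intro c t ht
    show (1 : ZMod n) + 2 * ((c : ℕ) : ZMod n)
        + ((nomadPartialSum' l k (t % (n - 1)) : ℤ) : ZMod n) = _
    rw [hT, hcastS t ht]
    push_cast
    ring
  have hper : ∀ i (t : ℕ), nomadFamily n k l i t = nomadFamily n k l i (t % (n - 1)) := by
    intro i t
    cases i <;> simp [nomadFamily, Nat.mod_mod_of_dvd t dvd_rfl]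
  -- the edge map does not produce loops
  have hEne : ∀ (i : Fin (n / 2) ⊕ Fin (n / 2)) (t : Fin (n - 1)),
      nomadFamily n k l i (t : ℕ) ≠ nomadFamily n k l i ((t : ℕ) + 1) := by
    intro i t heq
    have htl : (t : ℕ) < n - 1 := t.isLt
    have hA := habs ((t : ℕ) + 1) (by omega) (by omega)
    cases i with
    | inl c =>
      rw [hval1 c _ (by omega), hval1 c _ (by omega), hSsucc] at heq
      have hd := hdvd_of _ _ heq
      have hd' : (n : ℤ) ∣ -l ((t : ℕ) + 1) := dvd_congr _ _ (by ring) hd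
      rw [dvd_neg] at hd'
      rcases hdvd_cases _ hd' (by omega) (by omega) with h | h | h <;> omega
    | inr c =>
      rw [hval2 c _ (by omega), hval2 c _ (by omega), hSsucc] at heq
      have hd := hdvd_of _ _ heq
      have hd' : (n : ℤ) ∣ l ((t : ℕ) + 1) := dvd_congr _ _ (by ring) hd
      rcases hdvd_cases _ hd' (by omega) (by omega) with h | h | h <;> omega
  -- injectivity of the edge map
  have hEinj : ∀ (i j : Fin (n / 2) ⊕ Fin (n / 2)) (t t' : Fin (n - 1)),
      nomadFamily n k l i (t : ℕ) = nomadFamily n k l j (t' : ℕ) →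
      nomadFamily n k l i ((t : ℕ) + 1) = nomadFamily n k l j ((t' : ℕ) + 1) →
      i = j ∧ t = t' := by
    intro i j t t' h1 h2
    have htl : (t : ℕ) < n - 1 := t.isLt
    have htl' : (t' : ℕ) < n - 1 := t'.isLt
    have hA := habs ((t : ℕ) + 1) (by omega) (by omega)
    have hA' := habs ((t' : ℕ) + 1) (by omega) (by omega)
    cases i with
    | inl c =>
      cases j with
      | inl c' =>
        rw [hval1 c _ (by omega), hval1 c' _ (by omega)] at h1
        rw [hval1 c _ (by omega), hval1 c' _ (by omega)] at h2
        rw [hSsucc (t : ℕ), hSsucc (t' : ℕ)] at h2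
        have d1 := hdvd_of _ _ h1
        have d2 := hdvd_of _ _ h2
        have dll : (n : ℤ) ∣ l ((t : ℕ) + 1) - l ((t' : ℕ) + 1) :=
          dvd_congr _ _ (by ring) (dvd_sub d2 d1)
        have hll := hmatch1 _ _ (by omega) (by omega) (by omega) (by omega) dll
        have htt : (t : ℕ) = (t' : ℕ) := by
          by_contra hne
          have hp := hparity ((t : ℕ) + 1) ((t' : ℕ) + 1)
            (Finset.mem_Icc.mpr ⟨by omega, by omega⟩)
            (Finset.mem_Icc.mpr ⟨by omega, by omega⟩) (by omega) hll
          simp only [Nat.add_sub_cancel] at hp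
          have hpar2 := h2dvd _ _ h1
          omega
        have d1' : (n : ℤ) ∣ (2 * (c : ℕ) - 2 * ((c' : ℕ)) : ℤ) :=
          dvd_congr _ _ (by rw [htt]; ring) d1
        have hcv : (c : ℕ) < n / 2 := c.isLt
        have hcv' : (c' : ℕ) < n / 2 := c'.isLt
        have hcc : (c : ℕ) = (c' : ℕ) := by
          rcases hdvd_cases _ d1' (by omega) (by omega) with h | h | h <;> omega
        exact ⟨by rw [Fin.val_injective hcc], Fin.val_injective htt⟩
      | inr c' =>
        exfalso
        rw [hval1 c _ (by omega), hval2 c' _ (by omega)] at h1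
        rw [hval1 c _ (by omega), hval2 c' _ (by omega)] at h2
        rw [hSsucc (t : ℕ), hSsucc (t' : ℕ)] at h2
        have d1 := hdvd_of _ _ h1
        have d2 := hdvd_of _ _ h2
        have dll : (n : ℤ) ∣ l ((t : ℕ) + 1) + l ((t' : ℕ) + 1) :=
          dvd_congr _ _ (by ring) (dvd_sub d2 d1)
        have hm := hmatch2 _ _ (by omega) (by omega) (by omega) (by omega) dll
        have d1' : (n : ℤ) ∣ (2 * (c : ℕ) - 1 - 2 * ((c' : ℕ)) : ℤ) := by
          refine dvd_congr _ _ ?_ d1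
          rw [show ((t : ℕ)) = 0 by omega, show ((t' : ℕ)) = 0 by omega, hS0]
          ring
        have := dvd_trans h2nZ d1'
        omega
    | inr c =>
      cases j with
      | inl c' =>
        exfalso
        rw [hval2 c _ (by omega), hval1 c' _ (by omega)] at h1
        rw [hval2 c _ (by omega), hval1 c' _ (by omega)] at h2
        rw [hSsucc (t : ℕ), hSsucc (t' : ℕ)] at h2
        have d1 := hdvd_of _ _ h1
        have d2 := hdvd_of _ _ h2
        have dll : (n : ℤ) ∣ l ((t : ℕ) + 1) + l ((t' : ℕ) + 1) := by
          refine dvd_congr _ _ ?_ (dvd_neg.mpr (dvd_sub d2 d1))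
          ring
        have hm := hmatch2 _ _ (by omega) (by omega) (by omega) (by omega) dll
        have d1' : (n : ℤ) ∣ (2 * (c : ℕ) + 1 - 2 * ((c' : ℕ)) : ℤ) := by
          refine dvd_congr _ _ ?_ d1
          rw [show ((t : ℕ)) = 0 by omega, show ((t' : ℕ)) = 0 by omega, hS0]
          ring
        have := dvd_trans h2nZ d1'
        omega
      | inr c' =>
        rw [hval2 c _ (by omega), hval2 c' _ (by omega)] at h1
        rw [hval2 c _ (by omega), hval2 c' _ (by omega)] at h2
        rw [hSsucc (t : ℕ), hSsucc (t' : ℕ)] at h2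
        have d1 := hdvd_of _ _ h1
        have d2 := hdvd_of _ _ h2
        have dll : (n : ℤ) ∣ l ((t : ℕ) + 1) - l ((t' : ℕ) + 1) := by
          refine dvd_congr _ _ ?_ (dvd_neg.mpr (dvd_sub d2 d1))
          ring
        have hll := hmatch1 _ _ (by omega) (by omega) (by omega) (by omega) dll
        have htt : (t : ℕ) = (t' : ℕ) := by
          by_contra hne
          have hp := hparity ((t : ℕ) + 1) ((t' : ℕ) + 1)
            (Finset.mem_Icc.mpr ⟨by omega, by omega⟩)
            (Finset.mem_Icc.mpr ⟨by omega, by omega⟩) (by omega) hll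
          simp only [Nat.add_sub_cancel] at hp
          have hpar2 := h2dvd _ _ h1
          omega
        have d1' : (n : ℤ) ∣ (2 * (c : ℕ) - 2 * ((c' : ℕ)) : ℤ) :=
          dvd_congr _ _ (by rw [htt]; ring) d1
        have hcv : (c : ℕ) < n / 2 := c.isLt
        have hcv' : (c' : ℕ) < n / 2 := c'.isLt
        have hcc : (c : ℕ) = (c' : ℕ) := by
          rcases hdvd_cases _ d1' (by omega) (by omega) with h | h | h <;> omega
        exact ⟨by rw [Fin.val_injective hcc], Fin.val_injective htt⟩
  refine ⟨?_, ?_, ?_, ?_⟩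
  · -- periodicity
    intro i t
    have hm : (t + (n - 1)) % (n - 1) = t % (n - 1) := Nat.add_mod_right t (n - 1)
    cases i <;> simp [nomadFamily, hm]
  · -- injectivity on a period
    intro i t₁ t₂ h1 h2 heq
    cases i with
    | inl c =>
      rw [hval1 c t₁ (by omega), hval1 c t₂ (by omega)] at heq
      have h' : ((nomadPartialSum l t₁ : ℤ) : ZMod n) = ((nomadPartialSum l t₂ : ℤ) : ZMod n) := by
        push_cast at heq ⊢
        linear_combination heq
      exact hdistinct t₁ t₂ (by omega) (by omega) h'
    | inr c =>
      rw [hval2 c t₁ (by omega), hval2 c t₂ (by omega)] at heq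
      have h' : ((nomadPartialSum l t₁ : ℤ) : ZMod n) = ((nomadPartialSum l t₂ : ℤ) : ZMod n) := by
        push_cast at heq ⊢
        linear_combination -heq
      exact hdistinct t₁ t₂ (by omega) (by omega) h'
  · -- decomposition: every ordered pair appears exactly once
    intro u v huv
    set E : (Fin (n / 2) ⊕ Fin (n / 2)) × Fin (n - 1) → {p : ZMod n × ZMod n // p.1 ≠ p.2} :=
      fun x => ⟨(nomadFamily n k l x.1 (x.2 : ℕ), nomadFamily n k l x.1 ((x.2 : ℕ) + 1)),
        hEne x.1 x.2⟩ with hE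
    have hinj : Function.Injective E := by
      intro x y h
      have h1 : nomadFamily n k l x.1 (x.2 : ℕ) = nomadFamily n k l y.1 (y.2 : ℕ) :=
        congrArg (fun p => p.1.1) h
      have h2 : nomadFamily n k l x.1 ((x.2 : ℕ) + 1) = nomadFamily n k l y.1 ((y.2 : ℕ) + 1) :=
        congrArg (fun p => p.1.2) h
      obtain ⟨hij, htt⟩ := hEinj x.1 y.1 x.2 y.2 h1 h2
      exact Prod.ext hij htt
    have hcard : Fintype.card ((Fin (n / 2) ⊕ Fin (n / 2)) × Fin (n - 1))
        = Fintype.card {p : ZMod n × ZMod n // p.1 ≠ p.2} := by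
      have e : {p : ZMod n × ZMod n // p.1 = p.2} ≃ ZMod n :=
        ⟨fun p => p.1.1, fun a => ⟨(a, a), rfl⟩,
         fun p => Subtype.ext (Prod.ext rfl p.2), fun a => rfl⟩
      have hc1 : Fintype.card {p : ZMod n × ZMod n // p.1 = p.2} = n := by
        rw [Fintype.card_congr e, ZMod.card]
      have hc2 : Fintype.card {p : ZMod n × ZMod n // p.1 ≠ p.2} = n * n - n := by
        have hcompl := Fintype.card_subtype_compl (fun p : ZMod n × ZMod n => p.1 = p.2)
        rw [hcompl, hc1, Fintype.card_prod, ZMod.card]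
      rw [hc2]
      simp only [Fintype.card_prod, Fintype.card_sum, Fintype.card_fin]
      have e1 : n / 2 + n / 2 = n := by omega
      have e2 : n * n - n = n * (n - 1) := by
        cases n with
        | zero => rfl
        | succ m => simp [Nat.succ_sub_one, Nat.mul_succ, Nat.succ_mul]
      rw [e1, e2]
    have hbij : Function.Bijective E := (Fintype.bijective_iff_injective_and_card E).mpr
      ⟨hinj, hcard⟩
    obtain ⟨x, hx⟩ := hbij.2 ⟨(u, v), huv⟩
    have hx1 : nomadFamily n k l x.1 (x.2 : ℕ) = u := congrArg (fun p => p.1.1) hx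
    have hx2 : nomadFamily n k l x.1 ((x.2 : ℕ) + 1) = v := congrArg (fun p => p.1.2) hx
    refine ⟨x, ⟨hx1, hx2⟩, ?_⟩
    rintro y ⟨hy1, hy2⟩
    exact hinj (Subtype.ext (Prod.ext (hy1.trans hx1.symm) (hy2.trans hx2.symm)))
  · -- nomadic
    intro i j hij t heq
    rw [hper i t, hper j t] at heq
    have hts : t % (n - 1) ≤ n - 1 := le_of_lt (Nat.mod_lt _ (by omega))
    cases i with
    | inl c =>
      cases j with
      | inl c' =>
        rw [hval1 c _ hts, hval1 c' _ hts] at heq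
        have d := hdvd_of _ _ heq
        have d' : (n : ℤ) ∣ (2 * (c : ℕ) - 2 * ((c' : ℕ)) : ℤ) := dvd_congr _ _ (by ring) d
        have hcv : (c : ℕ) < n / 2 := c.isLt
        have hcv' : (c' : ℕ) < n / 2 := c'.isLt
        have hcc : (c : ℕ) = (c' : ℕ) := by
          rcases hdvd_cases _ d' (by omega) (by omega) with h | h | h <;> omega
        exact hij (by rw [Fin.val_injective hcc])
      | inr c' =>
        rw [hval1 c _ hts, hval2 c' _ hts] at heq
        have d := h2dvd _ _ heq
        omega
    | inr c =>
      cases j with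
      | inl c' =>
        rw [hval2 c _ hts, hval1 c' _ hts] at heq
        have d := h2dvd _ _ heq
        omega
      | inr c' =>
        rw [hval2 c _ hts, hval2 c' _ hts] at heq
        have d := hdvd_of _ _ heq
        have d' : (n : ℤ) ∣ (2 * (c : ℕ) - 2 * ((c' : ℕ)) : ℤ) := dvd_congr _ _ (by ring) d
        have hcv : (c : ℕ) < n / 2 := c.isLt
        have hcv' : (c' : ℕ) < n / 2 := c'.isLt
        have hcc : (c : ℕ) = (c' : ℕ) := by
          rcases hdvd_cases _ d' (by omega) (by omega) with h | h | h <;> omega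
        exact hij (by rw [Fin.val_injective hcc])
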